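/- Every abstract clone is isomorphic to a concrete clone, i.e., to the abstract clone of some clone of finitary operations on a set. -/
import Mathlib


universe u

/-- An abstract clone: sorts `B n`, distinguished elements `e n i` and
composition operations `q n k` satisfying associativity and the unit laws. -/
structure AbstractClone (B : ℕ → Type u) where
  e : (n : ℕ) → Fin n → B n
  q : (n k : ℕ) → B n → (Fin n → B k) → B k
  assoc : ∀ (m n k : ℕ) (x : B m) (y : Fin m → B n) (z : Fin n → B k),
    q n k (q m n x y) z = q m k x (fun i => q n k (y i) z)
  runit : ∀ (n : ℕ) (x : B n), q n n x (e n) = x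
  lunit : ∀ (n k : ℕ) (i : Fin n) (y : Fin n → B k), q n k (e n i) y = y i

namespace AbstractClone

variable {B : ℕ → Type u} (𝔅 : AbstractClone B)

/-- `x^{+1} = q_n^{n+1}(x, e_0^{n+1}, …, e_{n-1}^{n+1})`. -/
def plus (x : Σ n, B n) : Σ n, B n :=
  ⟨x.1 + 1, 𝔅.q x.1 (x.1 + 1) x.2 (fun i => 𝔅.e (x.1 + 1) i.castSucc)⟩

/-- The relation whose equivalence closure is `≈`: `x ≈ x^{+1}`. -/
def Rel (x y : Σ n, B n) : Prop := y = 𝔅.plus x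

def plusIter (x : Σ n, B n) : ℕ → Σ n, B n
  | 0 => x
  | j + 1 => 𝔅.plus (plusIter x j)

theorem plusIter_fst (x : Σ n, B n) (j : ℕ) : (𝔅.plusIter x j).1 = x.1 + j := by
  induction j with
  | zero => rfl
  | succ j ih =>
    show (𝔅.plusIter x j).1 + 1 = x.1 + (j + 1)
    omega

/-- Lift an element of `B m` to any sort `B k` with `m ≤ k`. -/
def toSort (x : Σ n, B n) (k : ℕ) (h : x.1 ≤ k) : B k :=
  cast (congrArg B (by rw [𝔅.plusIter_fst, Nat.add_sub_cancel' h]))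
    (𝔅.plusIter x (k - x.1)).2

end AbstractClone

namespace AbstractClone

variable {B : ℕ → Type u} (𝔅 : AbstractClone B)

theorem snd_heq {p q : Σ n, B n} (h : p = q) : HEq p.2 q.2 := by subst h; rfl

theorem plusIter_add (x : Σ n, B n) (j m : ℕ) :
    𝔅.plusIter x (j + m) = 𝔅.plusIter (𝔅.plusIter x j) m := by
  induction m with
  | zero => rfl
  | succ m ih =>
    show 𝔅.plus _ = 𝔅.plus _
    exact congrArg 𝔅.plus ih

/-- The equivalence generated by `Rel`. -/
def st : Setoid (Σ n, B n) where
  r x y := ∃ j j', 𝔅.plusIter x j = 𝔅.plusIter y j'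
  iseqv := by
    constructor
    · exact fun x => ⟨0, 0, rfl⟩
    · rintro x y ⟨j, j', h⟩; exact ⟨j', j, h.symm⟩
    · rintro x y z ⟨j1, j1', h1⟩ ⟨j2, j2', h2⟩
      refine ⟨j1 + j2, j2' + j1', ?_⟩
      rw [𝔅.plusIter_add, h1, ← 𝔅.plusIter_add, Nat.add_comm j1' j2,
        𝔅.plusIter_add, h2, ← 𝔅.plusIter_add]

/-- The carrier set: the direct limit of the sorts. -/
def CA : Type u := Quotient 𝔅.st

theorem mk_cast_eq (y : Σ n, B n) (k : ℕ) (p : y.1 = k) :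
    (⟨k, cast (congrArg B p) y.2⟩ : Σ n, B n) = y := by
  obtain ⟨m, v⟩ := y
  dsimp at p
  subst p
  rfl

theorem toSort_mk (x : Σ n, B n) (k : ℕ) (h : x.1 ≤ k) :
    (⟨k, 𝔅.toSort x k h⟩ : Σ n, B n) = 𝔅.plusIter x (k - x.1) :=
  mk_cast_eq (𝔅.plusIter x (k - x.1)) k
    (by rw [𝔅.plusIter_fst, Nat.add_sub_cancel' h])

theorem toSort_self {n : ℕ} (v : B n) (h : (⟨n, v⟩ : Σ n, B n).1 ≤ n) :
    𝔅.toSort ⟨n, v⟩ n h = v := by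
  have h1 := 𝔅.toSort_mk ⟨n, v⟩ n h
  rw [show n - (⟨n, v⟩ : Σ n, B n).1 = 0 from Nat.sub_self n] at h1
  exact eq_of_heq (snd_heq h1)

theorem toSort_class (x : Σ n, B n) (k : ℕ) (h : x.1 ≤ k) :
    Quotient.mk 𝔅.st (⟨k, 𝔅.toSort x k h⟩ : Σ n, B n) = Quotient.mk 𝔅.st x := by
  rw [𝔅.toSort_mk]
  exact Quotient.sound ⟨0, k - x.1, rfl⟩

theorem toSort_eq_of_meet {x y : Σ n, B n} {j j' : ℕ}
    (hm : 𝔅.plusIter x j = 𝔅.plusIter y j') {k : ℕ}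
    (hx : x.1 + j ≤ k) (hy : y.1 + j' ≤ k) (h1 : x.1 ≤ k) (h2 : y.1 ≤ k) :
    𝔅.toSort x k h1 = 𝔅.toSort y k h2 := by
  have key : (⟨k, 𝔅.toSort x k h1⟩ : Σ n, B n) = ⟨k, 𝔅.toSort y k h2⟩ := by
    rw [𝔅.toSort_mk, 𝔅.toSort_mk]
    have e2 : x.1 + j = y.1 + j' := by
      have h3 := congrArg Sigma.fst hm
      rw [𝔅.plusIter_fst, 𝔅.plusIter_fst] at h3
      exact h3
    rw [show k - x.1 = j + (k - x.1 - j) from by omega,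
      show k - y.1 = j' + (k - x.1 - j) from by omega,
      𝔅.plusIter_add, 𝔅.plusIter_add, hm]
  exact eq_of_heq (snd_heq key)

/-- `q` applied to canonical lifts of a family of arguments to sort `K`. -/
def valC {n : ℕ} (x : B n) (a : Fin n → Σ m, B m) (K : ℕ)
    (h : ∀ i, (a i).1 ≤ K) : Σ m, B m :=
  ⟨K, 𝔅.q n K x (fun i => 𝔅.toSort (a i) K (h i))⟩

theorem valC_succ {n : ℕ} (x : B n) (a : Fin n → Σ m, B m) (K : ℕ)
    (h : ∀ i, (a i).1 ≤ K) (h' : ∀ i, (a i).1 ≤ K + 1) :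
    𝔅.valC x a (K + 1) h' = 𝔅.plus (𝔅.valC x a K h) := by
  have args : (fun i => 𝔅.toSort (a i) (K + 1) (h' i)) =
      fun i => 𝔅.q K (K + 1) (𝔅.toSort (a i) K (h i))
        (fun r => 𝔅.e (K + 1) r.castSucc) := by
    funext i
    have s1 : 𝔅.plus ⟨K, 𝔅.toSort (a i) K (h i)⟩ =
        (⟨K + 1, 𝔅.toSort (a i) (K + 1) (h' i)⟩ : Σ m, B m) := by
      rw [𝔅.toSort_mk, 𝔅.toSort_mk]
      show 𝔅.plusIter (𝔅.plusIter (a i) (K - (a i).1)) 1 = _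
      rw [← 𝔅.plusIter_add]
      congr 1
      have := h i
      omega
    have s2 := snd_heq s1
    exact (eq_of_heq s2).symm
  show (⟨K + 1, 𝔅.q n (K + 1) x _⟩ : Σ m, B m) =
    ⟨K + 1, 𝔅.q K (K + 1) (𝔅.q n K x _) (fun r => 𝔅.e (K + 1) r.castSucc)⟩
  rw [𝔅.assoc, args]

theorem valC_equiv_le {n : ℕ} (x : B n) (a : Fin n → Σ m, B m) (K K' : ℕ)
    (h : ∀ i, (a i).1 ≤ K) (hK : K ≤ K') :
    Quotient.mk 𝔅.st (𝔅.valC x a K h) =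
      Quotient.mk 𝔅.st (𝔅.valC x a K' (fun i => (h i).trans hK)) := by
  induction K', hK using Nat.le_induction with
  | base => rfl
  | succ K' hK ih =>
    rw [ih]
    rw [𝔅.valC_succ x a K' (fun i => (h i).trans hK)]
    exact Quotient.sound ⟨1, 0, rfl⟩

/-- The finitary operation on `CA` induced by `x : B n`. -/
noncomputable def opOf {n : ℕ} (x : B n) : (Fin n → 𝔅.CA) → 𝔅.CA :=
  fun s => Quotient.mk 𝔅.st <| 𝔅.valC x (fun i => (s i).out)
    (Finset.univ.sup (fun i => ((s i).out).1))
    (by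
      intro i
      exact Finset.le_sup (f := fun i => ((s i).out).1) (Finset.mem_univ i))

/-- Master well-definedness lemma. -/
theorem opOf_eq {n : ℕ} (x : B n) (s : Fin n → 𝔅.CA) (a : Fin n → Σ m, B m)
    (ha : ∀ i, Quotient.mk 𝔅.st (a i) = s i) (K : ℕ) (h : ∀ i, (a i).1 ≤ K) :
    𝔅.opOf x s = Quotient.mk 𝔅.st (𝔅.valC x a K h) := by
  have hcc : ∀ i, ∃ j j', 𝔅.plusIter ((s i).out) j = 𝔅.plusIter (a i) j' := by
    intro i
    refine Quotient.exact (s := 𝔅.st) ?_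
    rw [ha]
    exact (s i).out_eq
  choose j j' hj using hcc
  set c : Fin n → Σ m, B m := fun i => (s i).out with hc
  set K0 : ℕ := Finset.univ.sup (fun i => (c i).1) with hK0
  have h0 : ∀ i, (c i).1 ≤ K0 := fun i =>
    Finset.le_sup (f := fun i => (c i).1) (Finset.mem_univ i)
  set N : Fin n → ℕ := fun i => max ((c i).1 + j i) ((a i).1 + j' i) with hN
  set K' : ℕ := max (Finset.univ.sup N) (max K0 K) with hK'
  have hNK' : ∀ i, N i ≤ K' :=
    fun i => le_trans (Finset.le_sup (Finset.mem_univ i)) (le_max_left _ _)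
  have hb1 : ∀ i, (c i).1 + j i ≤ K' := fun i => le_trans (le_max_left _ _) (hNK' i)
  have hb2 : ∀ i, (a i).1 + j' i ≤ K' := fun i => le_trans (le_max_right _ _) (hNK' i)
  have hcK' : ∀ i, (c i).1 ≤ K' := fun i => le_trans (Nat.le_add_right _ _) (hb1 i)
  have haK' : ∀ i, (a i).1 ≤ K' := fun i => le_trans (Nat.le_add_right _ _) (hb2 i)
  have hKc : K0 ≤ K' := le_trans (le_max_left _ _) (le_max_right _ _)
  have hKK' : K ≤ K' := le_trans (le_max_right _ _) (le_max_right _ _)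
  have step0 : 𝔅.opOf x s = Quotient.mk 𝔅.st (𝔅.valC x c K0 h0) := rfl
  have step1 : Quotient.mk 𝔅.st (𝔅.valC x c K0 h0) =
      Quotient.mk 𝔅.st (𝔅.valC x c K' hcK') := by
    have := 𝔅.valC_equiv_le x c K0 K' h0 hKc
    rw [this]
  have step2 : 𝔅.valC x c K' hcK' = 𝔅.valC x a K' haK' := by
    have harg : (fun i => 𝔅.toSort (c i) K' (hcK' i)) =
        fun i => 𝔅.toSort (a i) K' (haK' i) :=
      funext fun i => 𝔅.toSort_eq_of_meet (hj i) (hb1 i) (hb2 i) _ _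
    unfold valC
    rw [harg]
  have step3 : Quotient.mk 𝔅.st (𝔅.valC x a K h) =
      Quotient.mk 𝔅.st (𝔅.valC x a K' haK') := by
    have := 𝔅.valC_equiv_le x a K K' h hKK'
    rw [this]
  rw [step0, step1, step2, step3]

theorem plus_inj : Function.Injective 𝔅.plus := by
  rintro ⟨m, a⟩ ⟨m', b⟩ h
  have hfst : m + 1 = m' + 1 := congrArg Sigma.fst h
  obtain rfl : m = m' := by omega
  have hsnd : 𝔅.q m (m+1) a (fun i => 𝔅.e (m+1) i.castSucc) =
      𝔅.q m (m+1) b (fun i => 𝔅.e (m+1) i.castSucc) :=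
    eq_of_heq (snd_heq h)
  set z : Fin (m+1) → B m := fun i => if hi : i.1 < m then 𝔅.e m ⟨i.1, hi⟩ else a with hz
  have hzc : ∀ i : Fin m, z i.castSucc = 𝔅.e m i := by
    intro i
    simp only [hz, Fin.coe_castSucc, i.isLt, dif_pos]
  have key : ∀ w : B m,
      𝔅.q (m+1) m (𝔅.q m (m+1) w (fun i => 𝔅.e (m+1) i.castSucc)) z = w := by
    intro w
    rw [𝔅.assoc]
    have harg : (fun i => 𝔅.q (m+1) m (𝔅.e (m+1) i.castSucc) z) = 𝔅.e m := by
      funext i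
      rw [𝔅.lunit, hzc]
    rw [harg, 𝔅.runit]
  have hab := key a
  rw [hsnd, key b] at hab
  exact congrArg _ hab.symm

theorem opOf_inj {n : ℕ} : Function.Injective (𝔅.opOf : B n → _) := by
  intro x y hxy
  have hs : ∀ w : B n, 𝔅.opOf w (fun i => Quotient.mk 𝔅.st ⟨n, 𝔅.e n i⟩) =
      Quotient.mk 𝔅.st ⟨n, w⟩ := by
    intro w
    rw [𝔅.opOf_eq w _ (fun i => ⟨n, 𝔅.e n i⟩) (fun i => rfl) n (fun i => le_rfl)]
    unfold valC
    have harg : (fun i => 𝔅.toSort ⟨n, 𝔅.e n i⟩ n le_rfl) = 𝔅.e n := by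
      funext i; exact 𝔅.toSort_self (𝔅.e n i) le_rfl
    rw [harg, 𝔅.runit]
  have h2 : Quotient.mk 𝔅.st (⟨n, x⟩ : Σ m, B m) = Quotient.mk 𝔅.st ⟨n, y⟩ := by
    rw [← hs x, ← hs y, hxy]
  obtain ⟨j, j', hj⟩ := Quotient.exact h2
  have hfst := congrArg Sigma.fst hj
  rw [𝔅.plusIter_fst, 𝔅.plusIter_fst] at hfst
  have hfst' : n + j = n + j' := hfst
  obtain rfl : j = j' := by omega
  clear hfst hfst' h2 hxy hs
  induction j with
  | zero => exact eq_of_heq (snd_heq hj)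
  | succ j ih => exact ih (𝔅.plus_inj hj)

theorem opOf_proj {n : ℕ} (i : Fin n) :
    𝔅.opOf (𝔅.e n i) = fun s : Fin n → 𝔅.CA => s i := by
  funext s
  show Quotient.mk 𝔅.st ⟨_, 𝔅.q n _ (𝔅.e n i) _⟩ = s i
  rw [𝔅.lunit, 𝔅.toSort_class]
  exact (s i).out_eq

theorem opOf_comp {n k : ℕ} (x : B n) (y : Fin n → B k) :
    𝔅.opOf (𝔅.q n k x y) = fun s => 𝔅.opOf x (fun i => 𝔅.opOf (y i) s) := by
  funext s
  set c : Fin k → Σ m, B m := fun i => (s i).out with hc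
  set K : ℕ := Finset.univ.sup (fun i => (c i).1) with hK
  have hcK : ∀ i, (c i).1 ≤ K := fun i =>
    Finset.le_sup (f := fun i => (c i).1) (Finset.mem_univ i)
  have hout : ∀ i, Quotient.mk 𝔅.st (c i) = s i := fun i => (s i).out_eq
  have hin : ∀ i, 𝔅.opOf (y i) s = Quotient.mk 𝔅.st (𝔅.valC (y i) c K hcK) :=
    fun i => 𝔅.opOf_eq (y i) s c hout K hcK
  have hr : 𝔅.opOf x (fun i => 𝔅.opOf (y i) s) =
      Quotient.mk 𝔅.st (𝔅.valC x (fun i => 𝔅.valC (y i) c K hcK) K (fun i => le_rfl)) :=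
    𝔅.opOf_eq x _ _ (fun i => (hin i).symm) K (fun i => le_rfl)
  rw [hr, 𝔅.opOf_eq (𝔅.q n k x y) s c hout K hcK]
  have harg : (fun i => 𝔅.toSort (𝔅.valC (y i) c K hcK) K le_rfl) =
      fun i => 𝔅.q k K (y i) (fun r => 𝔅.toSort (c r) K (hcK r)) :=
    funext fun i => 𝔅.toSort_self _ le_rfl
  show Quotient.mk 𝔅.st ⟨K, 𝔅.q k K (𝔅.q n k x y) (fun r => 𝔅.toSort (c r) K (hcK r))⟩ =
    Quotient.mk 𝔅.st ⟨K, 𝔅.q n K x (fun i => 𝔅.toSort (𝔅.valC (y i) c K hcK) K le_rfl)⟩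
  rw [𝔅.assoc, harg]

end AbstractClone

/-- STATEMENT 1: every abstract clone is isomorphic to a concrete clone, i.e.
there is a set `A` and a clone `F` of finitary operations on `A` (containing
all projections and closed under composition) together with a family of
bijections `φ n : B n ≃ F n` commuting with the distinguished elements
(projections) and with composition. -/
theorem abstractClone_iso_concrete {B : ℕ → Type u} (𝔅 : AbstractClone B) :
    ∃ (A : Type u) (F : (n : ℕ) → Set ((Fin n → A) → A)),
      (∀ (n : ℕ) (i : Fin n), (fun x : Fin n → A => x i) ∈ F n) ∧
      (∀ (n k : ℕ) (f : (Fin n → A) → A) (g : Fin n → ((Fin k → A) → A)),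
        f ∈ F n → (∀ i, g i ∈ F k) →
        (fun x : Fin k → A => f (fun i => g i x)) ∈ F k) ∧
      ∃ φ : (n : ℕ) → B n ≃ F n,
        (∀ (n : ℕ) (i : Fin n),
          ((φ n (𝔅.e n i) : F n) : (Fin n → A) → A) = fun x => x i) ∧
        (∀ (n k : ℕ) (x : B n) (y : Fin n → B k),
          ((φ k (𝔅.q n k x y) : F k) : (Fin k → A) → A) =
            fun s => ((φ n x : F n) : (Fin n → A) → A)
              (fun i => ((φ k (y i) : F k) : (Fin k → A) → A) s)) := by
  refine ⟨𝔅.CA, fun n => Set.range (𝔅.opOf : B n → _), ?_, ?_, ?_⟩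
  · intro n i
    exact ⟨𝔅.e n i, 𝔅.opOf_proj i⟩
  · intro n k f g hf hg
    obtain ⟨x, rfl⟩ := hf
    choose ys hys using hg
    refine ⟨𝔅.q n k x ys, ?_⟩
    rw [𝔅.opOf_comp]
    funext s
    simp only [hys]
  · refine ⟨fun n => Equiv.ofInjective _ 𝔅.opOf_inj, ?_, ?_⟩
    · intro n i
      simp only [Equiv.ofInjective_apply]
      exact 𝔅.opOf_proj i
    · intro n k x y
      simp only [Equiv.ofInjective_apply]
      exact 𝔅.opOf_comp x y
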